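/- Let G be a 1-tough graph with minimum degree δ, C a longest cycle, and P a longest path in G \ C with endpoints x₁, x₂ of length p where 2 ≤ p = δ − 1. If s = |N_C(x₁) ∪ N_C(x₂)| measured as the number of elementary segments satisfies s ≥ 3 and each segment created on C by N_C(x₁) ∪ N_C(x₂) containing an attachment of both endpoints has length ≥ p + 2, then |C| > 2δ + 2; in particular, under the additional constraint |C| = 2δ + 2 one must have s ≤ 2. -/

import Mathlib

open SimpleGraph Finset

namespace Paper

variable {V : Type*}

/-- Number of connected components of `G` after deleting the vertex set `S`. -/
noncomputable def compCount (G : SimpleGraph V) (S : Set V) : ℕ :=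
  Nat.card ((G.induce Sᶜ).ConnectedComponent)

/-- `G` is 1-tough: every cutset `S` satisfies `|S| ≥ s(G \ S)`. -/
def OneTough [Fintype V] (G : SimpleGraph V) : Prop :=
  ∀ S : Finset V, 1 < compCount G ↑S → compCount G ↑S ≤ S.card

/-- The toughness of `G` equals 1. -/
def ToughnessEqOne [Fintype V] (G : SimpleGraph V) : Prop :=
  OneTough G ∧ ∃ S : Finset V, 1 < compCount G ↑S ∧ compCount G ↑S = S.card

/-- The vertex connectivity of `G` equals 2. -/
def ConnectivityEqTwo [Fintype V] (G : SimpleGraph V) : Prop :=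
  (∀ S : Finset V, S.card ≤ 1 → (G.induce (↑S : Set V)ᶜ).Connected) ∧
  ∃ S : Finset V, S.card = 2 ∧ ¬ (G.induce (↑S : Set V)ᶜ).Connected

/-- `G` is 3-connected: it stays connected after removing any 2 vertices. -/
def ThreeConnected [Fintype V] (G : SimpleGraph V) : Prop :=
  ∀ S : Finset V, S.card ≤ 2 → (G.induce (↑S : Set V)ᶜ).Connected

/-- `c` is a longest cycle of `G`. -/
def IsLongestCycle {G : SimpleGraph V} {u : V} (c : G.Walk u u) : Prop :=
  c.IsCycle ∧ ∀ (v : V) (d : G.Walk v v), d.IsCycle → d.length ≤ c.length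

/-- The cycle `c` is dominating: `G \ V(c)` is edgeless. -/
def IsDominating {G : SimpleGraph V} {u : V} (c : G.Walk u u) : Prop :=
  ∀ a b : V, G.Adj a b → a ∈ c.support ∨ b ∈ c.support

/-- The walk `p` avoids all vertices of the cycle `c`. -/
def AvoidsCycle {G : SimpleGraph V} {u x y : V} (c : G.Walk u u) (p : G.Walk x y) : Prop :=
  ∀ v ∈ p.support, v ∉ c.support

/-- `p` is a longest path of `G \ V(c)`. -/
def IsLongestPathOutside {G : SimpleGraph V} {u x y : V} (c : G.Walk u u)
    (p : G.Walk x y) : Prop :=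
  p.IsPath ∧ AvoidsCycle c p ∧
  ∀ (a b : V) (q : G.Walk a b), q.IsPath → AvoidsCycle c q → q.length ≤ p.length

/-- `N_C(x)`: the neighbors of `x` lying on the cycle `c`. -/
def NC [Fintype V] [DecidableEq V] (G : SimpleGraph V) [DecidableRel G.Adj]
    {u : V} (c : G.Walk u u) (x : V) : Finset V :=
  (G.neighborFinset x).filter (fun v => v ∈ c.support)

/-- The interior vertices of a segment (the walk minus its endpoints). -/
def interior {G : SimpleGraph V} {a b : V} (I : G.Walk a b) : Set V :=
  {v | v ∈ I.support ∧ v ≠ a ∧ v ≠ b}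

/-- `I` is an elementary segment of the cycle `c` created by the attachment set `A`:
an arc of `c` between consecutive vertices of `A`. -/
def IsSegment {G : SimpleGraph V} {u : V} (c : G.Walk u u)
    (A : Finset V) {a b : V} (I : G.Walk a b) : Prop :=
  I.IsPath ∧ 1 ≤ I.length ∧ a ∈ A ∧ b ∈ A ∧
  (∀ v ∈ I.support, v ∈ c.support) ∧
  (∀ e ∈ I.edges, e ∈ c.edges) ∧
  ∀ v ∈ interior I, v ∉ A

/-- `L` is an intermediate path between the elementary segments `Ia` and `Ib`:
it joins interior vertices of `Ia` and `Ib` and is internally disjoint from `c ∪ P`. -/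
def IsIntermediatePath {G : SimpleGraph V} {u x y : V} (c : G.Walk u u) (P : G.Walk x y)
    {a b a' b' z w : V} (Ia : G.Walk a b) (Ib : G.Walk a' b') (L : G.Walk z w) : Prop :=
  L.IsPath ∧ 1 ≤ L.length ∧ z ∈ interior Ia ∧ w ∈ interior Ib ∧
  ∀ v ∈ L.support, (v ∈ c.support ∨ v ∈ P.support) → v = z ∨ v = w

/-- Membership in the exceptional class `𝔉₁`. -/
def InF1 [Fintype V] (H : SimpleGraph V) [DecidableRel H.Adj] (d : ℕ) : Prop :=
  ∃ (x y₁ y₂ y₃ : V) (A : Fin 3 → Set V),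
    (∀ i j, i ≠ j → A i ∩ A j = {x}) ∧
    (⋃ i, A i) = Set.univ ∧
    y₁ ∈ A 0 ∧ y₂ ∈ A 1 ∧ y₃ ∈ A 2 ∧ y₁ ≠ x ∧ y₂ ≠ x ∧ y₃ ≠ x ∧
    H.Adj y₁ y₂ ∧ H.Adj y₂ y₃ ∧ H.Adj y₁ y₃ ∧
    (∀ a b : V, H.Adj a b → (∃ i, a ∈ A i ∧ b ∈ A i) ∨
      s(a, b) ∈ ({s(y₁, y₂), s(y₂, y₃), s(y₁, y₃)} : Set (Sym2 V))) ∧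
    (∀ i, (H.induce (A i)).Connected) ∧
    Nat.card (A 0) = d + 1 ∧ Nat.card (A 1) = d + 1 ∧
    d + 1 ≤ Nat.card (A 2) ∧ Nat.card (A 2) ≤ d + 2 ∧
    H.minDegree = d ∧ 3 ≤ d

/-- Membership in the exceptional class `𝔉₂`. -/
def InF2 [Fintype V] (H : SimpleGraph V) [DecidableRel H.Adj] : Prop :=
  ∃ (x z y₁ y₂ y₃ : V) (A : Fin 3 → Set V),
    (∀ i j, i ≠ j → A i ∩ A j = {x}) ∧
    ((⋃ i, A i) ∪ {z}) = Set.univ ∧ z ∉ ⋃ i, A i ∧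
    y₁ ∈ A 0 ∧ y₂ ∈ A 1 ∧ y₃ ∈ A 2 ∧ y₁ ≠ x ∧ y₂ ≠ x ∧ y₃ ≠ x ∧
    H.Adj z y₁ ∧ H.Adj z y₂ ∧ H.Adj z y₃ ∧ H.Adj y₁ y₂ ∧
    (∀ a b : V, H.Adj a b → (∃ i, a ∈ A i ∧ b ∈ A i) ∨
      s(a, b) ∈ ({s(z, y₁), s(z, y₂), s(z, y₃), s(y₁, y₂), s(y₁, y₃), s(y₂, y₃),
        s(z, x)} : Set (Sym2 V))) ∧
    (∀ i, Nat.card (A i) = 4) ∧ H.minDegree = 3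

/-- Membership in the exceptional class `𝔉₃`. -/
def InF3 [Fintype V] (H : SimpleGraph V) [DecidableRel H.Adj] : Prop :=
  ∃ (x z y₁ y₂ y₃ : V) (A : Fin 3 → Set V),
    (∀ i j, i ≠ j → A i ∩ A j = {x}) ∧
    ((⋃ i, A i) ∪ {z}) = Set.univ ∧ z ∉ ⋃ i, A i ∧
    y₁ ∈ A 0 ∧ y₂ ∈ A 1 ∧ y₃ ∈ A 2 ∧ y₁ ≠ x ∧ y₂ ≠ x ∧ y₃ ≠ x ∧
    H.Adj z y₁ ∧ H.Adj z y₂ ∧ H.Adj z y₃ ∧ H.Adj z x ∧ H.Adj y₁ y₂ ∧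
    (∀ a b : V, H.Adj a b → (∃ i, a ∈ A i ∧ b ∈ A i) ∨
      s(a, b) ∈ ({s(z, y₁), s(z, y₂), s(z, y₃), s(z, x), s(y₁, y₂), s(y₁, y₃),
        s(y₂, y₃)} : Set (Sym2 V))) ∧
    (∀ i, Nat.card (A i) = 5) ∧ H.minDegree = 4

/-- Membership in the exceptional class `𝔉₄`. -/
def InF4 [Fintype V] (H : SimpleGraph V) [DecidableRel H.Adj] : Prop :=
  ∃ (x y : V) (z : Fin 4 → V) (A : Fin 4 → Set V),
    x ≠ y ∧
    (∀ i j, i ≠ j → A i ∩ A j = {x, y}) ∧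
    (⋃ i, A i) = Set.univ ∧
    (∀ i, z i ∈ A i ∧ z i ≠ x ∧ z i ≠ y) ∧
    H.Adj (z 0) (z 1) ∧ H.Adj (z 1) (z 2) ∧ H.Adj (z 0) (z 2) ∧
    (∀ a b : V, H.Adj a b → (∃ i, a ∈ A i ∧ b ∈ A i) ∨
      s(a, b) ∈ ({s(z 0, z 1), s(z 1, z 2), s(z 0, z 2)} : Set (Sym2 V))) ∧
    (∀ i, Nat.card (A i) = 5) ∧ H.minDegree = 4


/-! ### Auxiliary lemmas -/

section AuxLemmas

variable {G : SimpleGraph V}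

lemma closed_mem_tail {v : V} (q : G.Walk v v) (hq : q.length ≠ 0) : v ∈ q.support.tail := by
  cases q with
  | nil => simp at hq
  | cons h q' => simpa using q'.end_mem_support

lemma mem_support_closed_iff {v x : V} (q : G.Walk v v) (hq : q.length ≠ 0) :
    x ∈ q.support ↔ x ∈ q.support.tail := by
  constructor
  · intro hx
    rcases List.mem_cons.1 (by rwa [q.support_eq_cons] at hx) with rfl | h
    · exact closed_mem_tail q hq
    · exact h
  · exact List.mem_of_mem_tail

lemma length_rotate' [DecidableEq V] {u w : V} (c : G.Walk u u) (hw : w ∈ c.support) :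
    (c.rotate w hw).length = c.length := by
  have h := congrArg Walk.length (c.take_spec hw)
  rw [Walk.length_append] at h
  unfold Walk.rotate
  rw [Walk.length_append]
  omega

lemma mem_support_rotate_iff [DecidableEq V] {u w x : V} (c : G.Walk u u) (hc0 : c.length ≠ 0)
    (hw : w ∈ c.support) : x ∈ (c.rotate w hw).support ↔ x ∈ c.support := by
  have h0 : (c.rotate w hw).length ≠ 0 := by rw [length_rotate' c hw]; exact hc0
  rw [mem_support_closed_iff _ h0, mem_support_closed_iff c hc0]
  exact (Walk.support_rotate c w hw).perm.mem_iff

lemma takeUntil_isPath_of_cycle [DecidableEq V] {w a : V} {c : G.Walk w w} (hc : c.IsCycle)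
    (ha : a ∈ c.support) (hne : a ≠ w) :
    (c.takeUntil a ha).IsPath ∧ (c.dropUntil a ha).IsPath := by
  have hspec : (c.takeUntil a ha).append (c.dropUntil a ha) = c := c.take_spec ha
  have htail : c.support.tail
      = (c.takeUntil a ha).support.tail ++ (c.dropUntil a ha).support.tail := by
    rw [← Walk.tail_support_append, hspec]
  have hnodup : ((c.takeUntil a ha).support.tail ++ (c.dropUntil a ha).support.tail).Nodup :=
    htail ▸ hc.support_nodup
  have haT : a ∈ (c.takeUntil a ha).support.tail := by
    have h := (c.takeUntil a ha).end_mem_support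
    rcases List.mem_cons.1 (by rwa [(c.takeUntil a ha).support_eq_cons] at h) with h' | h'
    · exact absurd h' hne
    · exact h'
  have hwD : w ∈ (c.dropUntil a ha).support.tail := by
    have h := (c.dropUntil a ha).end_mem_support
    rcases List.mem_cons.1 (by rwa [(c.dropUntil a ha).support_eq_cons] at h) with h' | h'
    · exact absurd h'.symm hne
    · exact h'
  rw [List.nodup_append] at hnodup
  constructor
  · rw [Walk.isPath_def, (c.takeUntil a ha).support_eq_cons]
    exact List.nodup_cons.2 ⟨fun hmem => hnodup.2.2 w hmem w hwD rfl, hnodup.1⟩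
  · rw [Walk.isPath_def, (c.dropUntil a ha).support_eq_cons]
    exact List.nodup_cons.2 ⟨fun hmem => hnodup.2.2 a haT a hmem rfl, hnodup.2.1⟩

lemma getVert_of_append {x y z : V} (T : G.Walk x y) (D : G.Walk y z) :
    (T.append D).getVert T.length = y := by
  rw [Walk.getVert_append]
  simp

lemma detour_le {u w a x y : V} {c : G.Walk u u} (hc : IsLongestCycle c)
    {Pi : G.Walk x y} (hPi : Pi.IsPath) (hav : AvoidsCycle c Pi)
    (hax : G.Adj x a) (hyw : G.Adj y w)
    {K : G.Walk w a} (hK : K.IsPath) (hKc : ∀ v ∈ K.support, v ∈ c.support)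
    (hne : a ≠ w) :
    Pi.length + 2 + K.length ≤ c.length := by
  have hxc : x ∉ c.support := hav x Pi.start_mem_support
  have hyc : y ∉ c.support := hav y Pi.end_mem_support
  have hac : a ∈ c.support := hKc a K.end_mem_support
  have hSp : (Walk.cons hyw K).IsPath := by
    rw [Walk.cons_isPath_iff]
    exact ⟨hK, fun h => hyc (hKc y h)⟩
  have hRp : (Pi.append (Walk.cons hyw K)).IsPath := by
    rw [Walk.isPath_def, Walk.support_append, Walk.support_cons, List.tail_cons]
    refine List.Nodup.append hPi.support_nodup hK.support_nodup ?_
    intro v hv hv'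
    exact hav v hv (hKc v hv')
  have hedge : s(a, x) ∉ (Pi.append (Walk.cons hyw K)).edges := by
    rw [Walk.edges_append, List.mem_append, Walk.edges_cons, List.mem_cons]
    rintro (h | h | h)
    · exact hav a (Pi.fst_mem_support_of_mem_edges h) hac
    · rw [Sym2.eq_iff] at h
      rcases h with ⟨h1, h2⟩ | ⟨h1, h2⟩
      · subst h1; exact hyc hac
      · exact hne h1
    · exact hxc (hKc x (K.snd_mem_support_of_mem_edges h))
  have hQ : (Walk.cons hax.symm (Pi.append (Walk.cons hyw K))).IsCycle :=
    (Walk.cons_isCycle_iff _ hax.symm).2 ⟨hRp, hedge⟩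
  have hle := hc.2 a _ hQ
  rw [Walk.length_cons, Walk.length_append, Walk.length_cons] at hle
  omega

lemma NC_nonempty [Fintype V] [DecidableEq V] [DecidableRel G.Adj]
    {u x y : V} (c : G.Walk u u) (Q : G.Walk x y)
    (hQp : Q.IsPath) (hQav : AvoidsCycle c Q)
    (hmax : ∀ (a b : V) (q : G.Walk a b), q.IsPath → AvoidsCycle c q → q.length ≤ Q.length)
    (hd : Q.length + 1 ≤ G.minDegree) :
    (NC G c x).Nonempty := by
  by_contra hne
  rw [Finset.not_nonempty_iff_eq_empty] at hne
  have hsub : G.neighborFinset x ⊆ Q.support.toFinset.erase x := by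
    intro v hv
    have hadj : G.Adj x v := by rwa [SimpleGraph.mem_neighborFinset] at hv
    have hvc : v ∉ c.support := by
      intro hvc
      have hmem : v ∈ NC G c x := by
        rw [NC, Finset.mem_filter]
        exact ⟨hv, hvc⟩
      rw [hne] at hmem
      exact absurd hmem (Finset.notMem_empty v)
    have hvQ : v ∈ Q.support := by
      by_contra hvQ
      have hWp : (Walk.cons hadj.symm Q).IsPath := hQp.cons hvQ
      have hWav : AvoidsCycle c (Walk.cons hadj.symm Q) := by
        intro z hz
        rcases List.mem_cons.1 (by rwa [Walk.support_cons] at hz) with rfl | hz'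
        · exact hvc
        · exact hQav z hz'
      have := hmax v y _ hWp hWav
      rw [Walk.length_cons] at this
      omega
    rw [Finset.mem_erase, List.mem_toFinset]
    exact ⟨(G.ne_of_adj hadj).symm, hvQ⟩
  have h1 : G.minDegree ≤ G.degree x := G.minDegree_le_degree x
  have h2 : G.degree x ≤ (Q.support.toFinset.erase x).card := Finset.card_le_card hsub
  have h3 : (Q.support.toFinset.erase x).card = Q.support.toFinset.card - 1 :=
    Finset.card_erase_of_mem (by rw [List.mem_toFinset]; exact Q.start_mem_support)
  have h4 : Q.support.toFinset.card ≤ Q.support.length := Q.support.toFinset_card_le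
  have h5 : Q.support.length = Q.length + 1 := Q.length_support
  omega

end AuxLemmas

theorem stmt_17 [Fintype V] [DecidableEq V] (G : SimpleGraph V) [DecidableRel G.Adj]
    (ht : OneTough G)
    {u x₁ x₂ : V} (c : G.Walk u u) (P : G.Walk x₁ x₂)
    (hc : IsLongestCycle c) (hP : IsLongestPathOutside c P)
    (hp2 : 2 ≤ P.length) (hpd : P.length + 1 = G.minDegree)
    (hseg : ∀ {a b : V} (I : G.Walk a b),
      IsSegment c (NC G c x₁ ∪ NC G c x₂) I →
      (a ∈ NC G c x₁ ∩ NC G c x₂ ∨ b ∈ NC G c x₁ ∩ NC G c x₂) →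
      P.length + 2 ≤ I.length) :
    (3 ≤ (NC G c x₁ ∪ NC G c x₂).card → 2 * G.minDegree + 2 < c.length) ∧
    (c.length = 2 * G.minDegree + 2 → (NC G c x₁ ∪ NC G c x₂).card ≤ 2) := by
  clear hseg ht
  obtain ⟨hPp, hPav, hPmax⟩ := hP
  have memNC : ∀ (z v : V), v ∈ NC G c z ↔ G.Adj z v ∧ v ∈ c.support := by
    intro z v
    rw [NC, Finset.mem_filter, SimpleGraph.mem_neighborFinset]
  have main : 3 ≤ (NC G c x₁ ∪ NC G c x₂).card → 2 * G.minDegree + 2 < c.length := by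
    intro hs3
    by_contra hlt
    push_neg at hlt
    have hn4 : c.length ≤ 2 * P.length + 4 := by omega
    have hc0 : c.length ≠ 0 := by have := hc.1.three_le_length; omega
    have hrevAv : AvoidsCycle c P.reverse := by
      intro v hv
      rw [Walk.support_reverse, List.mem_reverse] at hv
      exact hPav v hv
    have hrevMax : ∀ (a b : V) (q : G.Walk a b), q.IsPath → AvoidsCycle c q →
        q.length ≤ P.reverse.length := by
      intro a b q hq hq'
      rw [Walk.length_reverse]
      exact hPmax a b q hq hq'
    have hN1 : (NC G c x₁).Nonempty :=
      NC_nonempty c P hPp hPav hPmax (by omega)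
    have hN2 : (NC G c x₂).Nonempty :=
      NC_nonempty c P.reverse hPp.reverse hrevAv hrevMax
        (by rw [Walk.length_reverse]; omega)
    -- find the triple w, a, b
    obtain ⟨w, a, b, hwa, hwb, hab, hma, hmb⟩ :
        ∃ w a b : V, w ≠ a ∧ w ≠ b ∧ a ≠ b ∧
          ((w ∈ NC G c x₁ ∧ a ∈ NC G c x₂) ∨ (w ∈ NC G c x₂ ∧ a ∈ NC G c x₁)) ∧
          ((w ∈ NC G c x₁ ∧ b ∈ NC G c x₂) ∨ (w ∈ NC G c x₂ ∧ b ∈ NC G c x₁)) := by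
      by_cases hcom : (NC G c x₁ ∩ NC G c x₂).Nonempty
      · obtain ⟨w, hw⟩ := hcom
        rw [Finset.mem_inter] at hw
        have hwU : w ∈ NC G c x₁ ∪ NC G c x₂ := Finset.mem_union_left _ hw.1
        have h2 : 1 < ((NC G c x₁ ∪ NC G c x₂).erase w).card := by
          have := Finset.card_erase_of_mem hwU
          omega
        obtain ⟨a, ha, b, hb, hab⟩ := Finset.one_lt_card.1 h2
        rw [Finset.mem_erase] at ha hb
        refine ⟨w, a, b, fun h => ha.1 h.symm, fun h => hb.1 h.symm, hab, ?_, ?_⟩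
        · rcases Finset.mem_union.1 ha.2 with h | h
          · exact Or.inr ⟨hw.2, h⟩
          · exact Or.inl ⟨hw.1, h⟩
        · rcases Finset.mem_union.1 hb.2 with h | h
          · exact Or.inr ⟨hw.2, h⟩
          · exact Or.inl ⟨hw.1, h⟩
      · rw [Finset.not_nonempty_iff_eq_empty] at hcom
        have hdisj : ∀ v, v ∈ NC G c x₁ → v ∈ NC G c x₂ → False := by
          intro v h1 h2
          have : v ∈ NC G c x₁ ∩ NC G c x₂ := Finset.mem_inter.2 ⟨h1, h2⟩
          rw [hcom] at this
          exact absurd this (Finset.notMem_empty v)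
        by_cases h12 : 1 < (NC G c x₁).card
        · obtain ⟨a, ha, b, hb, hab⟩ := Finset.one_lt_card.1 h12
          obtain ⟨w, hwm⟩ := hN2
          refine ⟨w, a, b, ?_, ?_, hab, Or.inr ⟨hwm, ha⟩, Or.inr ⟨hwm, hb⟩⟩
          · rintro rfl; exact hdisj _ ha hwm
          · rintro rfl; exact hdisj _ hb hwm
        · have hcu : (NC G c x₁ ∪ NC G c x₂).card ≤ (NC G c x₁).card + (NC G c x₂).card :=
            Finset.card_union_le _ _
          have h22 : 1 < (NC G c x₂).card := by omega
          obtain ⟨a, ha, b, hb, hab⟩ := Finset.one_lt_card.1 h22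
          obtain ⟨w, hwm⟩ := hN1
          refine ⟨w, a, b, ?_, ?_, hab, Or.inl ⟨hwm, ha⟩, Or.inl ⟨hwm, hb⟩⟩
          · rintro rfl; exact hdisj _ hwm ha
          · rintro rfl; exact hdisj _ hwm hb
    have hwc : w ∈ c.support := by
      rcases hma with ⟨h, _⟩ | ⟨h, _⟩ <;> exact ((memNC _ w).1 h).2
    have hmemc' : ∀ z : V, z ∈ (c.rotate w hwc).support ↔ z ∈ c.support :=
      fun z => mem_support_rotate_iff c hc0 hwc
    have hc'cyc : (c.rotate w hwc).IsCycle := hc.1.rotate hwc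
    have hc'len : (c.rotate w hwc).length = c.length := length_rotate' c hwc
    have key : ∀ z : V, z ≠ w →
        ((w ∈ NC G c x₁ ∧ z ∈ NC G c x₂) ∨ (w ∈ NC G c x₂ ∧ z ∈ NC G c x₁)) →
        ∃ hz : z ∈ (c.rotate w hwc).support,
          P.length + 2 ≤ ((c.rotate w hwc).takeUntil z hz).length ∧
          ((c.rotate w hwc).takeUntil z hz).length + (P.length + 2) ≤ c.length := by
      intro z hzw hm
      have hzc : z ∈ c.support := by
        rcases hm with ⟨_, h⟩ | ⟨_, h⟩ <;> exact ((memNC _ z).1 h).2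
      have hz : z ∈ (c.rotate w hwc).support := (hmemc' z).2 hzc
      obtain ⟨hTp, hDp⟩ := takeUntil_isPath_of_cycle hc'cyc hz hzw
      have hTc : ∀ v ∈ ((c.rotate w hwc).takeUntil z hz).support, v ∈ c.support :=
        fun v hv => (hmemc' v).1 (Walk.support_takeUntil_subset _ hz hv)
      have hDc : ∀ v ∈ ((c.rotate w hwc).dropUntil z hz).reverse.support, v ∈ c.support := by
        intro v hv
        rw [Walk.support_reverse, List.mem_reverse] at hv
        exact (hmemc' v).1 (Walk.support_dropUntil_subset _ hz hv)
      have hsum : ((c.rotate w hwc).takeUntil z hz).length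
          + ((c.rotate w hwc).dropUntil z hz).length = c.length := by
        have h := congrArg Walk.length ((c.rotate w hwc).take_spec hz)
        rw [Walk.length_append] at h
        omega
      have hB1 : P.length + 2 + ((c.rotate w hwc).takeUntil z hz).length ≤ c.length := by
        rcases hm with ⟨hw1, hz2⟩ | ⟨hw2, hz1⟩
        · have hd := detour_le hc hPp.reverse hrevAv
            ((memNC x₂ z).1 hz2).1 ((memNC x₁ w).1 hw1).1 hTp hTc hzw
          rwa [Walk.length_reverse] at hd
        · exact detour_le hc hPp hPav ((memNC x₁ z).1 hz1).1 ((memNC x₂ w).1 hw2).1 hTp hTc hzw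
      have hB2 : P.length + 2 + ((c.rotate w hwc).dropUntil z hz).length ≤ c.length := by
        rcases hm with ⟨hw1, hz2⟩ | ⟨hw2, hz1⟩
        · have hd := detour_le hc hPp.reverse hrevAv
            ((memNC x₂ z).1 hz2).1 ((memNC x₁ w).1 hw1).1 hDp.reverse hDc hzw
          rwa [Walk.length_reverse, Walk.length_reverse] at hd
        · have hd := detour_le hc hPp hPav
            ((memNC x₁ z).1 hz1).1 ((memNC x₂ w).1 hw2).1 hDp.reverse hDc hzw
          rwa [Walk.length_reverse] at hd
      exact ⟨hz, by omega, by omega⟩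
    obtain ⟨ha, hA1, hA2⟩ := key a hwa.symm hma
    obtain ⟨hb, hB1, hB2⟩ := key b hwb.symm hmb
    have hga : (c.rotate w hwc).getVert ((c.rotate w hwc).takeUntil a ha).length = a := by
      have h := getVert_of_append ((c.rotate w hwc).takeUntil a ha) ((c.rotate w hwc).dropUntil a ha)
      rwa [Walk.take_spec] at h
    have hgb : (c.rotate w hwc).getVert ((c.rotate w hwc).takeUntil b hb).length = b := by
      have h := getVert_of_append ((c.rotate w hwc).takeUntil b hb) ((c.rotate w hwc).dropUntil b hb)
      rwa [Walk.take_spec] at h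
    have hne : ((c.rotate w hwc).takeUntil a ha).length ≠ ((c.rotate w hwc).takeUntil b hb).length := by
      intro heq
      apply hab
      rw [← hga, heq, hgb]
    omega
  refine ⟨main, fun hlen => ?_⟩
  by_contra h
  push_neg at h
  have := main (by omega)
  omega
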